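/- Let (Z, ν) be a measure space with σ-finite measure ν and π = (π_1,…,π_K) a probability vector. Suppose for each feature map g in a family G we are given class-conditional probability densities p_g^{i,c} w.r.t. ν (i ∈ [K], c ∈ [C]) and fixed class weights γ_{i,c} ≥ 0 with Σ_c γ_{i,c} = 1; set α_c = Σ_j π_j γ_{j,c} (assumed positive) and q_g^c = Σ_i (π_i γ_{i,c}/α_c) p_g^{i,c}. Define the source loss S(g) = inf over measurable ĥ : Z → Y_Δ of Σ_{i=1}^K π_i Σ_{c=1}^C γ_{i,c} ∫ l(ĥ(z), c) p_g^{i,c}(z) dν(z), and the divergence D(g) = D^α(Q_g^1,…,Q_g^C). Then for any g_1, g_2 ∈ G, S(g_1) ≤ S(g_2) if and only if D(g_1) ≥ D(g_2); in particular, g* minimizes S over G if and only if g* maximizes D over G. -/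

import Mathlib

open MeasureTheory

/-- **Theorem 6, part 2.** Minimizing the source loss `S` over a family of feature
maps is equivalent to maximizing the hypothesis-aware divergence `D` of the induced
class-conditional mixtures: `S g₁ ≤ S g₂ ↔ D g₂ ≤ D g₁`, and in particular `g*`
minimizes `S` iff `g*` maximizes `D`. -/
theorem general_DI_equiv_max_divergence
    {Z G : Type*} [MeasurableSpace Z] (ν : Measure Z) [SigmaFinite ν]
    (K C : ℕ) (hK : 0 < K) (hC : 0 < C)
    (L : ℝ) (hL : 0 ≤ L)
    (l : (Fin C → ℝ) → Fin C → ℝ)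
    (hl_meas : ∀ i, Measurable fun β => l β i)
    (hl_bounds : ∀ β ∈ stdSimplex ℝ (Fin C), ∀ i, 0 ≤ l β i ∧ l β i ≤ L)
    (w : Fin K → ℝ) (hw_nonneg : ∀ i, 0 ≤ w i) (hw_sum : ∑ i, w i = 1)
    -- class-conditional densities induced by each feature map g ∈ G
    (p : G → Fin K → Fin C → Z → ℝ)
    (hp_meas : ∀ g i c, Measurable (p g i c)) (hp_nonneg : ∀ g i c z, 0 ≤ p g i c z)
    (hp_prob : ∀ g i c, ∫ z, p g i c z ∂ν = 1)
    -- fixed class weights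
    (γ : Fin K → Fin C → ℝ) (hγ_nonneg : ∀ i c, 0 ≤ γ i c)
    (hγ_sum : ∀ i, ∑ c, γ i c = 1)
    (α : Fin C → ℝ) (hα : ∀ c, α c = ∑ j, w j * γ j c) (hα_pos : ∀ c, 0 < α c)
    -- class-c conditional mixture densities
    (q : G → Fin C → Z → ℝ)
    (hq : ∀ g c z, q g c z = ∑ i, (w i * γ i c / α c) * p g i c z)
    -- the source loss S and the divergence D
    (S D : G → ℝ)
    (hS : ∀ g, S g
      = ⨅ hh : {h : Z → Fin C → ℝ // Measurable h ∧ ∀ z, h z ∈ stdSimplex ℝ (Fin C)},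
          ∑ i, w i * ∑ c, γ i c * ∫ z, l (hh.1 z) c * p g i c z ∂ν)
    (hD : ∀ g, D g
      = -(⨅ hh : {h : Z → Fin C → ℝ // Measurable h ∧ ∀ z, h z ∈ stdSimplex ℝ (Fin C)},
            ∑ c, α c * ∫ z, l (hh.1 z) c * q g c z ∂ν)
          + ⨅ β : stdSimplex ℝ (Fin C), ∑ c, l β.1 c * α c) :
    (∀ g₁ g₂ : G, S g₁ ≤ S g₂ ↔ D g₂ ≤ D g₁)
    ∧ (∀ gs : G, (∀ g, S gs ≤ S g) ↔ (∀ g, D g ≤ D gs)) := by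

  -- integrability of the densities
  have hint : ∀ g i c, Integrable (p g i c) ν := by
    intro g i c
    by_contra h
    have h1 := hp_prob g i c
    rw [integral_undef h] at h1
    exact one_ne_zero h1.symm
  -- integrability of l(h z) c * p g i c z
  have hint2 : ∀ g i c (hh : {h : Z → Fin C → ℝ // Measurable h ∧
      ∀ z, h z ∈ stdSimplex ℝ (Fin C)}),
      Integrable (fun z => l (hh.1 z) c * p g i c z) ν := by
    intro g i c hh
    refine (hint g i c).bdd_mul (c := L) ?_ ?_
    · exact ((hl_meas c).comp hh.2.1).aestronglyMeasurable
    · refine Filter.Eventually.of_forall fun z => ?_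
      have := hl_bounds (hh.1 z) (hh.2.2 z) c
      rw [Real.norm_eq_abs, abs_of_nonneg this.1]
      exact this.2
  -- the key identity: the inner sums agree
  have key : ∀ g (hh : {h : Z → Fin C → ℝ // Measurable h ∧
      ∀ z, h z ∈ stdSimplex ℝ (Fin C)}),
      ∑ c, α c * ∫ z, l (hh.1 z) c * q g c z ∂ν
        = ∑ i, w i * ∑ c, γ i c * ∫ z, l (hh.1 z) c * p g i c z ∂ν := by
    intro g hh
    have step : ∀ c, α c * ∫ z, l (hh.1 z) c * q g c z ∂ν
        = ∑ i, w i * (γ i c * ∫ z, l (hh.1 z) c * p g i c z ∂ν) := by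
      intro c
      have h1 : (fun z => l (hh.1 z) c * q g c z)
          = fun z => ∑ i, (w i * γ i c / α c) * (l (hh.1 z) c * p g i c z) := by
        funext z
        rw [hq]
        rw [Finset.mul_sum]
        exact Finset.sum_congr rfl fun i _ => by ring
      rw [h1, integral_finset_sum _ (fun i _ => ((hint2 g i c hh).const_mul _)),
        Finset.mul_sum]
      refine Finset.sum_congr rfl fun i _ => ?_
      rw [integral_const_mul]
      have hαc := (hα_pos c).ne'
      field_simp
    rw [Finset.sum_congr rfl fun c _ => step c, Finset.sum_comm]
    exact Finset.sum_congr rfl fun i _ => (Finset.mul_sum _ _ _).symm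
  -- hence D g = -(S g) + const
  set cst : ℝ := ⨅ β : stdSimplex ℝ (Fin C), ∑ c, l β.1 c * α c with hcst
  have hDS : ∀ g, D g = -(S g) + cst := by
    intro g
    rw [hD, hS]
    congr 2
    exact iInf_congr fun hh => key g hh
  constructor
  · intro g₁ g₂
    rw [hDS, hDS]
    constructor
    · intro h; linarith
    · intro h; linarith
  · intro gs
    constructor
    · intro h g
      rw [hDS, hDS]
      have := h g; linarith
    · intro h g
      have := h g
      rw [hDS, hDS] at this; linarith
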